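/- Let f ∈ G(Δ) ∩ C_A^3(1) with f(1) = 0 be of the form f(z) = −(1−z)²p(z). Then f is the generator of a semigroup S = {F_t}_{t≥0} consisting of affine self-mappings of Δ if and only if the following two conditions hold: (i) Re p(z) ≥ f'(1)/2 for all z ∈ Δ; (ii) f''(1) = f'''(1) = 0. In this case β := f'(1) ≥ 0 and f(z) = β(z−1). -/

import Mathlib

open Complex Filter Set Metric ComplexConjugate

noncomputable section

/-- The open unit disk in ℂ. -/
def unitDisk : Set ℂ := {z : ℂ | ‖z‖ < 1}

/-- Stolz angle (nontangential approach region) with vertex `ζ` and aperture `k`. -/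
def stolzAngle (ζ : ℂ) (k : ℝ) : Set ℂ :=
  {z : ℂ | z ∈ unitDisk ∧ ‖z - ζ‖ < k * (1 - ‖z‖)}

/-- Angular (nontangential) limit of `g` at the boundary point `ζ` equals `L`:
the limit of `g` within every Stolz angle with vertex `ζ`. -/
def AngularLimAt (g : ℂ → ℂ) (ζ L : ℂ) : Prop :=
  ∀ k : ℝ, 1 < k → Filter.Tendsto g (nhdsWithin ζ (stolzAngle ζ k)) (nhds L)

/-- `g` belongs to `C_A^3(1)` with angular boundary values `a0 = g(1)`, `a1 = g'(1)`,
`a2 = g''(1)`, `a3 = g'''(1)`: the remainder of the third order Taylor expansion at `1`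
is `o((z-1)^3)` angularly. -/
def CA3At1 (g : ℂ → ℂ) (a0 a1 a2 a3 : ℂ) : Prop :=
  AngularLimAt (fun z =>
    (g z - (a0 + a1 * (z - 1) + a2 / 2 * (z - 1) ^ 2 + a3 / 6 * (z - 1) ^ 3)) / (z - 1) ^ 3) 1 0

/-- Holomorphic self-mapping of the unit disk. -/
def HolSelfMap (F : ℂ → ℂ) : Prop :=
  DifferentiableOn ℂ F unitDisk ∧ Set.MapsTo F unitDisk unitDisk

/-- `F` is a linear fractional transformation on the unit disk. -/
def IsLFTOn (F : ℂ → ℂ) : Prop :=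
  ∃ a b c d : ℂ, a * d - b * c ≠ 0 ∧ ∀ z ∈ unitDisk, F z = (a * z + b) / (c * z + d)

/-- `F` is a (holomorphic) automorphism of the unit disk. -/
def IsAutomorphismOfDisk (F : ℂ → ℂ) : Prop :=
  HolSelfMap F ∧ ∃ G : ℂ → ℂ, HolSelfMap G ∧
    (∀ z ∈ unitDisk, G (F z) = z) ∧ (∀ z ∈ unitDisk, F (G z) = z)

/-- The horocycle `D(1,k)` internally tangent to the unit circle at 1. -/
def horocycle (k : ℝ) : Set ℂ :=
  {z : ℂ | z ∈ unitDisk ∧ ‖1 - z‖ ^ 2 / (1 - ‖z‖ ^ 2) < k}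

/-- `τ` is the Denjoy–Wolff point of `F`: the iterates converge pointwise to `τ`. -/
def IsDenjoyWolffPt (F : ℂ → ℂ) (τ : ℂ) : Prop :=
  ∀ z ∈ unitDisk, Filter.Tendsto (fun n : ℕ => F^[n] z) Filter.atTop (nhds τ)

/-- A one-parameter continuous semigroup of holomorphic self-mappings of the disk. -/
def IsSemigroupOnDisk (S : ℝ → ℂ → ℂ) : Prop :=
  (∀ t : ℝ, 0 ≤ t → HolSelfMap (S t)) ∧
  (∀ t : ℝ, 0 ≤ t → ∀ s : ℝ, 0 ≤ s → ∀ z ∈ unitDisk, S (t + s) z = S t (S s z)) ∧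
  (∀ z ∈ unitDisk, Filter.Tendsto (fun t : ℝ => S t z) (nhdsWithin 0 (Set.Ioi 0)) (nhds z))

/-- `f` is the infinitesimal generator of the semigroup `S`. -/
def Generates (f : ℂ → ℂ) (S : ℝ → ℂ → ℂ) : Prop :=
  IsSemigroupOnDisk S ∧
  ∀ z ∈ unitDisk,
    Filter.Tendsto (fun t : ℝ => (z - S t z) / (t : ℂ)) (nhdsWithin 0 (Set.Ioi 0)) (nhds (f z))

/-- `f` belongs to the class `G(Δ)` of infinitesimal generators on the disk. -/
def IsGenerator (f : ℂ → ℂ) : Prop :=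
  DifferentiableOn ℂ f unitDisk ∧ ∃ S : ℝ → ℂ → ℂ, Generates f S

/-- `f` generates a one-parameter group of automorphisms of the disk
(equivalently, both `f` and `-f` are generators). -/
def GeneratesGroupOfAutomorphisms (f : ℂ → ℂ) : Prop :=
  IsGenerator f ∧ IsGenerator (fun z => -f z)

/-- Hyperbolic automorphism of the disk: an automorphism with boundary Denjoy–Wolff point `τ`
and angular derivative `0 < F'(τ) < 1`. -/
def IsHyperbolicAut (F : ℂ → ℂ) : Prop :=
  IsAutomorphismOfDisk F ∧ ∃ τ : ℂ, ‖τ‖ = 1 ∧ IsDenjoyWolffPt F τ ∧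
    ∃ α : ℝ, 0 < α ∧ α < 1 ∧ AngularLimAt (fun z => (F z - τ) / (z - τ)) τ (α : ℂ)

/-- Parabolic automorphism of the disk: an automorphism with boundary Denjoy–Wolff point `τ`
and angular derivative `F'(τ) = 1`. -/
def IsParabolicAut (F : ℂ → ℂ) : Prop :=
  IsAutomorphismOfDisk F ∧ ∃ τ : ℂ, ‖τ‖ = 1 ∧ IsDenjoyWolffPt F τ ∧
    AngularLimAt (fun z => (F z - τ) / (z - τ)) τ 1

lemma unitDisk_eq : unitDisk = Metric.ball (0:ℂ) 1 := by
  ext z; simp [unitDisk, Metric.mem_ball, Complex.dist_eq]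

lemma disk_open : IsOpen unitDisk := by rw [unitDisk_eq]; exact isOpen_ball

lemma disk_convex : Convex ℝ unitDisk := by rw [unitDisk_eq]; exact convex_ball 0 1

lemma mem_disk_of_real {r : ℝ} (h0 : 0 ≤ r) (h1 : r < 1) : (r:ℂ) ∈ unitDisk := by
  simp [unitDisk, Complex.norm_real, Real.norm_eq_abs, _root_.abs_of_nonneg h0, h1]

lemma one_sub_ne {z : ℂ} (hz : z ∈ unitDisk) : (1:ℂ) - z ≠ 0 := by
  intro h
  have : z = 1 := by linear_combination -h
  simp [unitDisk, this] at hz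

lemma key_normSq (r : ℝ) (w : ℂ) :
    normSq (1 + r*w) - normSq (w + r) = (1 - r^2) * (1 - normSq w) := by
  simp [normSq_apply, add_re, add_im, mul_re, mul_im, ofReal_re, ofReal_im]
  ring

lemma key_normSq' (r : ℝ) (w : ℂ) :
    normSq (1 - r*w) - normSq (w - r) = (1 - r^2) * (1 - normSq w) := by
  simp [normSq_apply, sub_re, sub_im, mul_re, mul_im, ofReal_re, ofReal_im]
  ring

lemma abs_lt_abs_of_normSq {a b : ℂ} (h : normSq a < normSq b) :
    ‖a‖ < ‖b‖ := by
  rw [Complex.norm_def, Complex.norm_def]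
  exact Real.sqrt_lt_sqrt (normSq_nonneg _) h


set_option maxHeartbeats 1000000 in
lemma harnack_strict {h : ℂ → ℂ} (hd : DifferentiableOn ℂ h unitDisk)
    (hre : ∀ w ∈ unitDisk, 0 < (h w).re) {r : ℝ} (hr0 : 0 ≤ r) (hr1 : r < 1)
    {z : ℂ} (hz : z ∈ unitDisk) :
    (h r).re * (1 - ‖(z - r)/(1 - r*z)‖) ≤
      (h z).re * (1 + ‖(z - r)/(1 - r*z)‖) := by
  have hrd : (r:ℂ) ∈ unitDisk := mem_disk_of_real hr0 hr1
  have habs_r : ‖(r:ℂ)‖ < 1 := hrd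
  -- denominators nonzero
  have hden : ∀ w ∈ unitDisk, (1:ℂ) + r*w ≠ 0 := by
    intro w hw he
    have : ‖(r:ℂ)*w‖ < 1 := by
      rw [norm_mul]
      calc ‖(r:ℂ)‖ * ‖w‖ ≤ 1 * ‖w‖ := by
            apply mul_le_mul_of_nonneg_right habs_r.le (norm_nonneg _)
        _ = ‖w‖ := by ring
        _ < 1 := hw
    have : ‖(r:ℂ)*w‖ = 1 := by
      have : (r:ℂ)*w = -1 := by linear_combination he
      simp [this]
    linarith
  set φ : ℂ → ℂ := fun w => (w + r)/(1 + r*w) with hφ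
  have hφmaps : MapsTo φ unitDisk unitDisk := by
    intro w hw
    have h1 : normSq (1 + r*w) - normSq (w + r) = (1 - r^2) * (1 - normSq w) :=
      key_normSq r w
    have h2 : normSq w < 1 := by
      rw [← Complex.sq_norm]
      exact pow_lt_one₀ (norm_nonneg w) hw (by norm_num)
    have hr2 : r^2 < 1 := by nlinarith
    have h3 : normSq (w + r) < normSq (1 + r*w) := by
      nlinarith [mul_pos (by linarith : (0:ℝ) < 1 - r^2) (by linarith : (0:ℝ) < 1 - normSq w)]
    have h4 : ‖w + r‖ < ‖1 + r*w‖ := abs_lt_abs_of_normSq h3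
    have : ‖φ w‖ < 1 := by
      rw [hφ]; simp only [norm_div]
      rw [div_lt_one (lt_of_le_of_lt (norm_nonneg _) h4)]
      exact h4
    exact this
  have hφdiff : DifferentiableOn ℂ φ unitDisk := by
    apply DifferentiableOn.div
    · exact (differentiableOn_id.add_const _)
    · exact (differentiableOn_const _).add ((differentiableOn_const _).mul differentiableOn_id)
    · exact hden
  have hφ0 : φ 0 = r := by simp [hφ]
  set c : ℂ := h r with hc
  have hcre : 0 < c.re := hre _ hrd
  set H : ℂ → ℂ := fun w => h (φ w) with hH
  have hHdiff : DifferentiableOn ℂ H unitDisk := hd.comp hφdiff hφmaps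
  have hHre : ∀ w ∈ unitDisk, 0 < (H w).re := fun w hw => hre _ (hφmaps hw)
  set Φ : ℂ → ℂ := fun w => (H w - c)/(H w + conj c) with hΦ
  have hΦden : ∀ w ∈ unitDisk, H w + conj c ≠ 0 := by
    intro w hw he
    have : (H w + conj c).re = 0 := by rw [he]; simp
    rw [add_re, conj_re] at this
    have := hHre w hw
    linarith
  have hΦdiff : DifferentiableOn ℂ Φ unitDisk :=
    (hHdiff.sub_const _).div (hHdiff.add_const _) hΦden
  have hΦmaps : MapsTo Φ unitDisk unitDisk := by
    intro w hw
    have h1 : normSq (H w + conj c) - normSq (H w - c) = 4 * (H w).re * c.re := by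
      simp [normSq_apply, add_re, add_im, sub_re, sub_im, conj_re, conj_im]
      ring
    have h3 : normSq (H w - c) < normSq (H w + conj c) := by
      nlinarith [hHre w hw, hcre]
    have h4 := abs_lt_abs_of_normSq h3
    show ‖_‖ < 1
    rw [hΦ]; simp only [norm_div]
    rw [div_lt_one (lt_of_le_of_lt (norm_nonneg _) h4)]
    exact h4
  have hΦ0 : Φ 0 = 0 := by
    rw [hΦ]; simp only
    rw [hH]; simp only [hφ0, ← hc, sub_self, zero_div]
  -- Schwarz lemma
  have hball : unitDisk = Metric.ball (0:ℂ) 1 := unitDisk_eq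
  have schwarz : ∀ w ∈ unitDisk, ‖Φ w‖ ≤ ‖w‖ := by
    intro w hw
    have := Complex.norm_le_norm_of_mapsTo_ball
      (by rw [← hball]; exact hΦdiff) (by rw [← hball]; intro w hw; exact Metric.ball_subset_closedBall (x := 0) (ε := 1) (by rw [← hball]; exact hΦmaps hw)) hΦ0
      (by rw [← hball] at *; exact hw)
    simpa using this
  -- the point w0
  have hszq : normSq z < 1 := by
    rw [← Complex.sq_norm]
    exact pow_lt_one₀ (norm_nonneg z) hz (by norm_num)
  have hr2 : r^2 < 1 := by nlinarith
  have hkey := key_normSq' r z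
  have hpos : (0:ℝ) < (1 - r^2) * (1 - normSq z) :=
    mul_pos (by linarith) (by linarith)
  have hrz : (1:ℂ) - r*z ≠ 0 := by
    intro he
    have : normSq ((1:ℂ) - r*z) = 0 := by rw [he]; simp
    nlinarith [normSq_nonneg (z - (r:ℂ))]
  set w0 : ℂ := (z - r)/(1 - r*z) with hw0def
  have habs_lt : ‖z - r‖ < ‖1 - r*z‖ :=
    abs_lt_abs_of_normSq (by nlinarith)
  have hw0 : w0 ∈ unitDisk := by
    show ‖w0‖ < 1
    rw [hw0def, norm_div, div_lt_one (lt_of_le_of_lt (norm_nonneg _) habs_lt)]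
    exact habs_lt
  have hφw0 : φ w0 = z := by
    have e1 : w0 + r = z*(1 + r*w0) := by
      have hrz' : (1:ℂ) - z*r ≠ 0 := by rw [mul_comm]; exact hrz
      rw [hw0def]; field_simp; ring
    rw [hφ]; simp only
    rw [e1, mul_div_assoc, div_self (hden w0 hw0), mul_one]
  have hschw := schwarz w0 hw0
  have hΦw0 : Φ w0 = (h z - c)/(h z + conj c) := by
    rw [hΦ]; simp only [hH, hφw0]
  rw [hΦw0, norm_div, div_le_iff₀ (norm_pos_iff.2 (by
    rw [← hφw0]; exact hΦden w0 hw0))] at hschw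
  set d : ℝ := ‖w0‖ with hddef
  have hd0 : 0 ≤ d := norm_nonneg _
  have hd1 : d < 1 := hw0
  have habs2 : normSq (h z - c) ≤ d^2 * normSq (h z + conj c) := by
    rw [← Complex.sq_norm, ← Complex.sq_norm]
    nlinarith [norm_nonneg (h z - c), norm_nonneg (h z + conj c),
      mul_self_le_mul_self (norm_nonneg (h z - c)) hschw]
  have e2 : normSq (h z - c) = ((h z).re - c.re)^2 + ((h z).im - c.im)^2 := by
    simp [normSq_apply, sub_re, sub_im]; ring
  have e3 : normSq (h z + conj c) = ((h z).re + c.re)^2 + ((h z).im - c.im)^2 := by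
    simp [normSq_apply, add_re, add_im, conj_re, conj_im]; ring
  rw [e2, e3] at habs2
  have hx := hre z hz
  show c.re * (1 - d) ≤ (h z).re * (1 + d)
  have hdm : d^2 ≤ 1 := by nlinarith
  have h5 : ((h z).re - c.re)^2 ≤ d^2*((h z).re + c.re)^2 := by
    have := mul_nonneg (sub_nonneg.2 hdm) (sq_nonneg ((h z).im - c.im))
    nlinarith [habs2]
  nlinarith [h5, mul_nonneg hd0 (add_pos hx hcre).le, sq_nonneg (c.re - (h z).re - d*((h z).re + c.re)), sq_nonneg (c.re - (h z).re + d*((h z).re + c.re))]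

lemma harnack {h : ℂ → ℂ} (hd : DifferentiableOn ℂ h unitDisk)
    (hre : ∀ w ∈ unitDisk, 0 ≤ (h w).re) {r : ℝ} (hr0 : 0 ≤ r) (hr1 : r < 1)
    {z : ℂ} (hz : z ∈ unitDisk) :
    (h r).re * (1 - ‖(z - r)/(1 - r*z)‖) ≤
      (h z).re * (1 + ‖(z - r)/(1 - r*z)‖) := by
  set d : ℝ := ‖(z - r)/(1 - r*z)‖ with hd'
  have hd0 : 0 ≤ d := norm_nonneg _
  by_contra hcon
  push_neg at hcon
  set ε : ℝ := ((h r).re * (1 - d) - (h z).re * (1 + d)) / 3 with hε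
  have hεpos : 0 < ε := by rw [hε]; linarith
  have hstrict := harnack_strict (h := fun w => h w + ε)
    (hd.add_const _) (fun w hw => by
      simp only [add_re, ofReal_re]
      have := hre w hw; linarith) hr0 hr1 hz
  simp only [add_re, ofReal_re] at hstrict
  have hd1 : d ≤ 1 := by
    by_contra hd1
    push_neg at hd1
    nlinarith [hre z hz, hre (r:ℂ) (mem_disk_of_real hr0 hr1), hcon]
  nlinarith [hstrict, hεpos, hd0, hd1]

instance : (nhdsWithin (1:ℝ) (Set.Iio 1)).NeBot := nhdsLT_neBot 1

lemma eventually_Ioo : ∀ᶠ r : ℝ in nhdsWithin 1 (Set.Iio 1), r ∈ Set.Ioo (0:ℝ) 1 := by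
  have h1 : Set.Ioo (0:ℝ) 1 ∈ nhdsWithin (1:ℝ) (Set.Iio 1) := by
    rw [mem_nhdsWithin]
    exact ⟨Set.Ioi 0, isOpen_Ioi, by norm_num, by
      intro x hx; exact ⟨hx.1, hx.2⟩⟩
  exact h1

lemma tendsto_radial {g : ℂ → ℂ} {L : ℂ}
    (h : ∀ k : ℝ, 1 < k → Filter.Tendsto g (nhdsWithin 1 {z : ℂ | z ∈ unitDisk ∧ ‖z - 1‖ < k * (1 - ‖z‖)}) (nhds L)) :
    Tendsto (fun r : ℝ => g r) (nhdsWithin 1 (Set.Iio 1)) (nhds L) := by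
  refine (h 2 one_lt_two).comp ?_
  apply tendsto_nhdsWithin_of_tendsto_nhds_of_eventually_within
  · exact (Complex.continuous_ofReal.tendsto 1).comp
      (nhdsWithin_le_nhds)
  · filter_upwards [eventually_Ioo] with r hr
    constructor
    · show ‖_‖ < 1
      rw [Complex.norm_real, Real.norm_eq_abs, _root_.abs_of_nonneg hr.1.le]; exact hr.2
    · rw [Complex.norm_real, Real.norm_eq_abs, _root_.abs_of_nonneg hr.1.le]
      have : (r:ℂ) - 1 = ((r - 1 : ℝ) : ℂ) := by push_cast; ring
      rw [this, Complex.norm_real, Real.norm_eq_abs, _root_.abs_of_nonpos (by linarith [hr.2])]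
      linarith [hr.2]

lemma const_of_re_nonneg_zero {q : ℂ → ℂ} (hq : DifferentiableOn ℂ q unitDisk)
    (h1 : ∀ z ∈ unitDisk, 0 ≤ (q z).re) (h0 : (q 0).re = 0) :
    ∀ z ∈ unitDisk, q z = q 0 := by
  have h0mem : (0:ℂ) ∈ unitDisk := by simp [unitDisk]
  set g : ℂ → ℂ := fun z => Complex.exp (-q z) with hg
  have hgdiff : DifferentiableOn ℂ g unitDisk := (hq.neg).cexp
  have hmax : IsMaxOn (norm ∘ g) unitDisk 0 := by
    intro w hw
    simp only [Function.comp_apply, hg, Complex.norm_exp, neg_re]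
    exact Real.exp_le_exp.2 (by have := h1 w hw; rw [h0]; linarith)
  have heq := Complex.eqOn_of_isPreconnected_of_isMaxOn_norm
    (disk_convex.isPreconnected) disk_open hgdiff h0mem hmax
  -- deduce deriv q = 0 on disk
  have hderiv : ∀ z ∈ unitDisk, deriv q z = 0 := by
    intro z hzd
    have hqz : DifferentiableAt ℂ q z := hq.differentiableAt (disk_open.mem_nhds hzd)
    have hgd : HasDerivAt g (Complex.exp (-q z) * (-deriv q z)) z :=
      (hqz.hasDerivAt.neg).cexp
    have hev : g =ᶠ[nhds z] fun _ => g 0 := by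
      filter_upwards [disk_open.mem_nhds hzd] with w hw
      exact heq hw
    have : deriv g z = 0 := by rw [hev.deriv_eq]; simp
    rw [hgd.deriv] at this
    have hexp : Complex.exp (-q z) ≠ 0 := Complex.exp_ne_zero _
    rcases mul_eq_zero.1 this with h' | h'
    · exact absurd h' hexp
    · exact neg_eq_zero.1 h'
  intro z hzd
  apply disk_convex.is_const_of_fderivWithin_eq_zero hq _ hzd h0mem
  intro x hx
  rw [fderivWithin_of_isOpen disk_open hx]
  have hqx : DifferentiableAt ℂ q x := hq.differentiableAt (disk_open.mem_nhds hx)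
  refine ContinuousLinearMap.ext fun w => ?_
  show fderiv ℂ q x w = (0 : ℂ →L[ℂ] ℂ) w
  rw [ContinuousLinearMap.zero_apply]
  have : fderiv ℂ q x w = w • (fderiv ℂ q x 1) := by
    rw [← map_smul]; congr 1; simp [smul_eq_mul]
  rw [this]
  have : fderiv ℂ q x 1 = deriv q x := rfl
  rw [this, hderiv x hx]
  simp

lemma tendsto_coe_one : Tendsto (fun r : ℝ => (r:ℂ)) (nhdsWithin 1 (Set.Iio 1)) (nhds 1) :=
  (Complex.continuous_ofReal.tendsto 1).mono_left nhdsWithin_le_nhds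

lemma tendsto_id_real : Tendsto (fun r : ℝ => r) (nhdsWithin (1:ℝ) (Set.Iio 1)) (nhds 1) :=
  tendsto_id.mono_left nhdsWithin_le_nhds

lemma tendsto_one_sub : Tendsto (fun r : ℝ => 1 - (r:ℂ)) (nhdsWithin 1 (Set.Iio 1)) (nhds 0) := by
  have h2 : Tendsto (fun r : ℝ => (1:ℂ) - (r:ℂ)) (nhdsWithin 1 (Set.Iio 1)) (nhds (1 - 1)) :=
    Tendsto.sub tendsto_const_nhds tendsto_coe_one
  simpa using h2

lemma tendsto_one_sub_real : Tendsto (fun r : ℝ => 1 - r) (nhdsWithin (1:ℝ) (Set.Iio 1)) (nhds 0) := by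
  have h2 : Tendsto (fun r : ℝ => (1:ℝ) - r) (nhdsWithin (1:ℝ) (Set.Iio 1)) (nhds (1 - 1)) :=
    Tendsto.sub tendsto_const_nhds tendsto_id_real
  simpa using h2

lemma tendsto_one_add_real : Tendsto (fun r : ℝ => 1 + r) (nhdsWithin (1:ℝ) (Set.Iio 1)) (nhds 2) := by
  have h2 : Tendsto (fun r : ℝ => (1:ℝ) + r) (nhdsWithin (1:ℝ) (Set.Iio 1)) (nhds (1 + 1)) :=
    Tendsto.add tendsto_const_nhds tendsto_id_real
  norm_num at h2
  exact h2

set_option maxHeartbeats 1600000 in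
lemma rigidity {f : ℂ → ℂ} (hf : DifferentiableOn ℂ f unitDisk) {β : ℝ}
    (hG : Tendsto (fun r : ℝ => (f r - β*((r:ℂ)-1))/((r:ℂ)-1)^3)
      (nhdsWithin 1 (Set.Iio 1)) (nhds 0))
    {p : ℂ → ℂ} (hp : ∀ z ∈ unitDisk, f z = -(1 - z)^2 * p z)
    (hre : ∀ z ∈ unitDisk, β/2 ≤ (p z).re) :
    0 ≤ β ∧ ∀ z ∈ unitDisk, f z = (β:ℂ)*(z-1) := by
  set G : ℝ → ℂ := fun r => (f r - β*((r:ℂ)-1))/((r:ℂ)-1)^3 with hGdef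
  have hprep : ∀ r ∈ Set.Ioo (0:ℝ) 1, p r = (β:ℂ)/(1-(r:ℂ)) + (1-(r:ℂ))*G r := by
    intro r hr
    have hrd := mem_disk_of_real hr.1.le hr.2
    have hne : (1:ℂ) - r ≠ 0 := one_sub_ne hrd
    have hne' : ((r:ℂ)-1) ≠ 0 := fun h => hne (by linear_combination -h)
    have hfp := hp _ hrd
    rw [hGdef]
    simp only
    field_simp
    linear_combination (-((r:ℂ)-1)^2) * hfp
  -- limit of (1-r) * p r
  have htend1 : Tendsto (fun r : ℝ => (1-(r:ℂ))*p r) (nhdsWithin 1 (Set.Iio 1)) (nhds (β:ℂ)) := by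
    have hev : ∀ᶠ r : ℝ in nhdsWithin 1 (Set.Iio 1),
        (β:ℂ) + (1-(r:ℂ))^2*G r = (1-(r:ℂ))*p r := by
      filter_upwards [eventually_Ioo] with r hr
      have hne : (1:ℂ) - r ≠ 0 := one_sub_ne (mem_disk_of_real hr.1.le hr.2)
      rw [hprep r hr]
      field_simp
    have h2 : Tendsto (fun r : ℝ => (β:ℂ) + (1-(r:ℂ))^2*G r)
        (nhdsWithin 1 (Set.Iio 1)) (nhds (β:ℂ)) := by
      have h3 : Tendsto (fun r : ℝ => (β:ℂ) + (1-(r:ℂ))^2*G r)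
          (nhdsWithin 1 (Set.Iio 1)) (nhds ((β:ℂ) + 0^2*0)) :=
        Tendsto.add tendsto_const_nhds ((tendsto_one_sub.pow 2).mul hG)
      norm_num at h3
      exact h3
    exact h2.congr' hev
  have hretend : Tendsto (fun r : ℝ => ((1-(r:ℂ))*p r).re) (nhdsWithin 1 (Set.Iio 1)) (nhds β) := by
    have h2 : Tendsto (fun r : ℝ => ((1-(r:ℂ))*p r).re) (nhdsWithin 1 (Set.Iio 1))
        (nhds ((β:ℂ)).re) := (Complex.continuous_re.tendsto _).comp htend1
    simpa using h2
  -- nonnegativity of β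
  have hβ : 0 ≤ β := by
    have h0 : Tendsto (fun r : ℝ => (1-r)*(β/2)) (nhdsWithin 1 (Set.Iio 1)) (nhds 0) := by
      simpa using tendsto_one_sub_real.mul_const (β/2)
    refine le_of_tendsto_of_tendsto h0 hretend ?_
    filter_upwards [eventually_Ioo] with r hr
    have hrd := mem_disk_of_real hr.1.le hr.2
    have he : ((1-(r:ℂ))*p r).re = (1-r)*(p r).re := by
      rw [show (1:ℂ)-(r:ℂ) = ((1-r:ℝ):ℂ) by push_cast; ring, Complex.re_ofReal_mul]
    rw [he]
    exact mul_le_mul_of_nonneg_left (hre _ hrd) (by linarith [hr.2])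
  -- p is differentiable
  have pdiff : DifferentiableOn ℂ p unitDisk := by
    have heqp : ∀ z ∈ unitDisk, p z = f z / (-(1-z)^2) := by
      intro z hz
      rw [hp z hz]
      field_simp [one_sub_ne hz]
    have hd2 : DifferentiableOn ℂ (fun z => f z / (-(1-z)^2)) unitDisk := by
      apply hf.div
      · apply DifferentiableOn.neg
        exact ((differentiableOn_const _).sub differentiableOn_id).pow 2
      · intro z hz
        simp only [neg_ne_zero]
        exact pow_ne_zero 2 (one_sub_ne hz)
    exact hd2.congr heqp
  set q : ℂ → ℂ := fun z => p z - (β:ℂ)/(1-z) with hqdef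
  have qdiff : DifferentiableOn ℂ q unitDisk := by
    apply pdiff.sub
    exact (differentiableOn_const _).div ((differentiableOn_const _).sub differentiableOn_id)
      (fun z hz => one_sub_ne hz)
  -- Stage 1 : Re q ≥ 0 on the disk
  have hq_re : ∀ z ∈ unitDisk, 0 ≤ (q z).re := by
    intro z hz
    have hN0 : 0 < normSq (1-z) := normSq_pos.2 (one_sub_ne hz)
    have hNz : normSq z < 1 := by
      rw [← Complex.sq_norm]
      exact pow_lt_one₀ (norm_nonneg z) hz (by norm_num)
    set h : ℂ → ℂ := fun w => p w - ((β:ℂ)/2) with hhdef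
    have hhd : DifferentiableOn ℂ h unitDisk := pdiff.sub_const _
    have hhre : ∀ w ∈ unitDisk, 0 ≤ (h w).re := by
      intro w hw
      have := hre w hw
      simp only [hhdef, sub_re]
      have : ((β:ℂ)/2).re = β/2 := by
        rw [show ((β:ℂ)/2) = ((β/2 : ℝ):ℂ) by push_cast; ring, Complex.ofReal_re]
      rw [this]
      linarith [hre w hw]
    set d : ℝ → ℝ := fun r => ‖(z - r)/(1 - r*z)‖ with hddef
    have habs1z : ‖1 - z‖ ≠ 0 := norm_ne_zero_iff.2 (one_sub_ne hz)
    have htendd : Tendsto d (nhdsWithin 1 (Set.Iio 1)) (nhds 1) := by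
      have hnum : Tendsto (fun r : ℝ => ‖z - r‖) (nhdsWithin 1 (Set.Iio 1))
          (nhds (‖z - 1‖)) :=
        ((continuous_norm.comp (continuous_const.sub Complex.continuous_ofReal)).tendsto
          1).mono_left nhdsWithin_le_nhds
      have hden : Tendsto (fun r : ℝ => ‖1 - r*z‖) (nhdsWithin 1 (Set.Iio 1))
          (nhds (‖1 - z‖)) := by
        have : Tendsto (fun r : ℝ => ‖1 - r*z‖) (nhdsWithin 1 (Set.Iio 1))
            (nhds (‖1 - 1*z‖)) :=
          ((continuous_norm.comp (continuous_const.sub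
            (Complex.continuous_ofReal.mul continuous_const))).tendsto 1).mono_left
            nhdsWithin_le_nhds
        simpa using this
      have h2 := hnum.div hden habs1z
      have he : ‖z - 1‖ / ‖1 - z‖ = 1 := by
        rw [norm_sub_rev z 1]
        exact div_self habs1z
      rw [he] at h2
      refine h2.congr (fun r => ?_)
      rw [hddef]
      simp [norm_div]
    have h1pd : Tendsto (fun r : ℝ => (h z).re * (1 + d r)) (nhdsWithin 1 (Set.Iio 1))
        (nhds ((h z).re * 2)) := by
      have h2 : Tendsto (fun r : ℝ => (1:ℝ) + d r) (nhdsWithin 1 (Set.Iio 1)) (nhds (1+1)) :=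
        Tendsto.add tendsto_const_nhds htendd
      norm_num at h2
      exact (Tendsto.const_mul _ h2)
    -- limit of LHS
    have htendh : Tendsto (fun r : ℝ => (1-r) * (h r).re) (nhdsWithin 1 (Set.Iio 1)) (nhds β) := by
      have hev : ∀ᶠ r : ℝ in nhdsWithin 1 (Set.Iio 1),
          ((1-(r:ℂ))*p r).re - (1-r)*(β/2) = (1-r) * (h r).re := by
        filter_upwards [eventually_Ioo] with r hr
        rw [hhdef]
        simp only [sub_re]
        rw [show (1:ℂ)-(r:ℂ) = ((1-r:ℝ):ℂ) by push_cast; ring, Complex.re_ofReal_mul]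
        have : ((β:ℂ)/2).re = β/2 := by
          rw [show ((β:ℂ)/2) = ((β/2 : ℝ):ℂ) by push_cast; ring, Complex.ofReal_re]
        rw [this]
        ring
      have h2 : Tendsto (fun r : ℝ => ((1-(r:ℂ))*p r).re - (1-r)*(β/2))
          (nhdsWithin 1 (Set.Iio 1)) (nhds (β - 0*(β/2))) :=
        Tendsto.sub hretend (tendsto_one_sub_real.mul_const _)
      simp only [zero_mul, sub_zero] at h2
      exact h2.congr' hev
    have hLHS : Tendsto (fun r : ℝ => (h r).re * (1 - d r)) (nhdsWithin 1 (Set.Iio 1))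
        (nhds (β * ((1 - normSq z)/normSq (1-z)))) := by
      have hev : ∀ᶠ r : ℝ in nhdsWithin 1 (Set.Iio 1),
          ((1-r) * (h r).re) * ((1+r)*(1-normSq z)/(normSq (1 - r*z)*(1+d r)))
            = (h r).re * (1 - d r) := by
        filter_upwards [eventually_Ioo] with r hr
        have hr2 : r^2 < 1 := by nlinarith [hr.1, hr.2]
        have hkey := key_normSq' r z
        have hpos : (0:ℝ) < (1 - r^2) * (1 - normSq z) := mul_pos (by linarith) (by linarith)
        have hrz : (1:ℂ) - r*z ≠ 0 := by
          intro he
          have : normSq ((1:ℂ) - r*z) = 0 := by rw [he]; simp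
          nlinarith [normSq_nonneg (z - (r:ℂ))]
        have hdenpos : 0 < normSq (1 - (r:ℂ)*z) := normSq_pos.2 hrz
        have hd0 : 0 ≤ d r := norm_nonneg _
        have h1d : (0:ℝ) < 1 + d r := by linarith
        have hd2 : d r^2 = normSq (z-(r:ℂ))/normSq (1-(r:ℂ)*z) := by
          rw [hddef]
          simp only [norm_div, div_pow, Complex.sq_norm]
        have e : (1 - d r)*(1+d r) = (1-r^2)*(1-normSq z)/normSq (1-(r:ℂ)*z) := by
          rw [show (1-d r)*(1+d r) = 1 - d r^2 by ring, hd2]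
          rw [eq_div_iff hdenpos.ne', sub_mul, div_mul_cancel₀ _ hdenpos.ne']
          linarith [hkey]
        have e2 : 1 - d r = (1-r^2)*(1-normSq z)/(normSq (1-(r:ℂ)*z)*(1+d r)) := by
          rw [eq_div_iff (by positivity)]
          calc (1 - d r) * (normSq (1-(r:ℂ)*z)*(1+d r))
              = ((1 - d r)*(1 + d r)) * normSq (1-(r:ℂ)*z) := by ring
            _ = (1-r^2)*(1-normSq z) := by rw [e]; field_simp
        rw [e2]
        field_simp
        ring
      have h2 : Tendsto (fun r : ℝ => ((1-r) * (h r).re) *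
          ((1+r)*(1-normSq z)/(normSq (1 - r*z)*(1+d r))))
          (nhdsWithin 1 (Set.Iio 1))
          (nhds (β * (2*(1-normSq z)/(normSq (1-z)*(1+1))))) := by
        apply Tendsto.mul htendh
        apply Tendsto.div
        · exact (tendsto_one_add_real.mul_const _)
        · apply Tendsto.mul
          · have : Tendsto (fun r : ℝ => normSq (1 - r*z)) (nhdsWithin 1 (Set.Iio 1))
                (nhds (normSq (1 - 1*z))) :=
              ((Complex.continuous_normSq.comp (continuous_const.sub
                (Complex.continuous_ofReal.mul continuous_const))).tendsto 1).mono_left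
                nhdsWithin_le_nhds
            simpa using this
          · have h3 : Tendsto (fun r : ℝ => (1:ℝ) + d r) (nhdsWithin 1 (Set.Iio 1))
                (nhds (1+1)) := Tendsto.add tendsto_const_nhds htendd
            exact h3
        · positivity
      have he : β * (2*(1-normSq z)/(normSq (1-z)*(1+1))) = β * ((1 - normSq z)/normSq (1-z)) := by
        ring
      rw [he] at h2
      exact h2.congr' hev
    -- pass to the limit in Harnack
    have hineq : β * ((1 - normSq z)/normSq (1-z)) ≤ (h z).re * 2 := by
      refine le_of_tendsto_of_tendsto hLHS h1pd ?_
      filter_upwards [eventually_Ioo] with r hr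
      exact harnack hhd hhre hr.1.le hr.2 hz
    -- conclude
    have hqre1 : ((β:ℂ)/(1-z)).re = β*(1-z).re/normSq (1-z) := by
      rw [Complex.div_re]
      simp [Complex.ofReal_re, Complex.ofReal_im]
    have hN : normSq (1-z) = 1 - 2*z.re + normSq z := by
      simp [normSq_apply, Complex.sub_re, Complex.sub_im]
      ring
    have hhz : (h z).re = (p z).re - β/2 := by
      simp only [hhdef, sub_re]
      rw [show ((β:ℂ)/2) = ((β/2 : ℝ):ℂ) by push_cast; ring, Complex.ofReal_re]
    rw [hhz] at hineq
    have h6 : β*(1-normSq z) ≤ ((p z).re - β/2)*2*normSq (1-z) := by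
      rw [← mul_div_assoc] at hineq
      exact (div_le_iff₀ hN0).1 hineq
    have hβN : β*normSq (1-z) = β*(1-2*z.re+normSq z) := by rw [hN]
    have h7 : 2*((p z).re * normSq (1-z)) - β*normSq (1-z)
        = ((p z).re - β/2)*2*normSq (1-z) := by ring
    have hgoal : β*(1 - z.re) ≤ (p z).re * normSq (1-z) := by linarith [h6, hβN, h7]
    have he8 : (q z).re = (p z).re - β*(1-z.re)/normSq (1-z) := by
      rw [hqdef]
      simp only [sub_re]
      rw [hqre1]
      simp [Complex.sub_re, Complex.one_re]
    rw [he8, sub_nonneg, div_le_iff₀ hN0]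
    exact hgoal
  -- Stage 2 : Re q(0) = 0
  have h0mem : (0:ℂ) ∈ unitDisk := by simp [unitDisk]
  have hGre : Tendsto (fun r : ℝ => (G r).re) (nhdsWithin 1 (Set.Iio 1)) (nhds 0) := by
    have h2 : Tendsto (fun r : ℝ => (G r).re) (nhdsWithin 1 (Set.Iio 1)) (nhds ((0:ℂ).re)) :=
      (Complex.continuous_re.tendsto _).comp hG
    simpa using h2
  have hq0 : (q 0).re = 0 := by
    have hle : (q 0).re ≤ 0 := by
      have htendR : Tendsto (fun r : ℝ => (G r).re * (1+r)) (nhdsWithin 1 (Set.Iio 1))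
          (nhds (0*2)) := Tendsto.mul hGre tendsto_one_add_real
      norm_num at htendR
      refine le_of_tendsto_of_tendsto (f := fun _ : ℝ => (q 0).re) tendsto_const_nhds htendR ?_
      filter_upwards [eventually_Ioo] with r hr
      have hrd := mem_disk_of_real hr.1.le hr.2
      have hqr : (q r).re = (1-r) * (G r).re := by
        have : q r = (1-(r:ℂ))*G r := by
          rw [hqdef]
          simp only
          rw [hprep r hr]
          ring
        rw [this, show (1:ℂ)-(r:ℂ) = ((1-r:ℝ):ℂ) by push_cast; ring, Complex.re_ofReal_mul]
      have hhar := harnack qdiff hq_re (le_refl (0:ℝ)) one_pos hrd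
      have hsimp : ‖((r:ℂ) - ((0:ℝ):ℂ))/(1 - ((0:ℝ):ℂ)*(r:ℂ))‖ = r := by
        simp [Complex.norm_real, Real.norm_eq_abs, _root_.abs_of_nonneg hr.1.le]
      rw [hsimp] at hhar
      have h00 : ((0:ℝ):ℂ) = (0:ℂ) := by norm_num
      rw [h00] at hhar
      rw [hqr] at hhar
      -- hhar : (q 0).re * (1 - r) ≤ (1-r)*(G r).re * (1+r)
      have h1r : 0 < 1 - r := by linarith [hr.2]
      nlinarith [hhar]
    exact le_antisymm hle (hq_re 0 h0mem)
  -- q is constant, equal to 0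
  have hconst := const_of_re_nonneg_zero qdiff hq_re hq0
  have hq00 : q 0 = 0 := by
    have htq : Tendsto (fun r : ℝ => q r) (nhdsWithin 1 (Set.Iio 1)) (nhds 0) := by
      have hev : ∀ᶠ r : ℝ in nhdsWithin 1 (Set.Iio 1), (1-(r:ℂ))*G r = q r := by
        filter_upwards [eventually_Ioo] with r hr
        rw [hqdef]
        simp only
        rw [hprep r hr]
        ring
      have h2 : Tendsto (fun r : ℝ => (1-(r:ℂ))*G r) (nhdsWithin 1 (Set.Iio 1)) (nhds (0*0)) :=
        Tendsto.mul tendsto_one_sub hG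
      norm_num at h2
      exact h2.congr' hev
    have htq2 : Tendsto (fun r : ℝ => q r) (nhdsWithin 1 (Set.Iio 1)) (nhds (q 0)) := by
      have hev : ∀ᶠ r : ℝ in nhdsWithin 1 (Set.Iio 1), q 0 = q r := by
        filter_upwards [eventually_Ioo] with r hr
        exact (hconst _ (mem_disk_of_real hr.1.le hr.2)).symm
      exact tendsto_const_nhds.congr' hev
    exact tendsto_nhds_unique htq2 htq
  refine ⟨hβ, fun z hz => ?_⟩
  have hqz : q z = 0 := by rw [hconst z hz, hq00]
  have hpz : p z = (β:ℂ)/(1-z) := by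
    have := hqz
    rw [hqdef] at this
    simp only at this
    linear_combination this
  rw [hp z hz, hpz]
  have hne := one_sub_ne hz
  field_simp
  ring

lemma affine_bound {u v : ℂ} (h : ∀ z ∈ unitDisk, u*z + v ∈ unitDisk) :
    ‖u‖ + ‖v‖ ≤ 1 := by
  by_contra hcon
  push_neg at hcon
  have hv : ‖v‖ < 1 := by
    have := h 0 (by simp [unitDisk])
    simpa [unitDisk] using this
  have hu : u ≠ 0 := by
    intro h0
    rw [h0] at hcon
    simp at hcon
    linarith
  have hupos : 0 < ‖u‖ := norm_pos_iff.2 hu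
  have hcu : (↑(‖u‖) : ℂ) ≠ 0 := Complex.ofReal_ne_zero.2 hupos.ne'
  set s : ℝ := (1 - ‖v‖ + ‖u‖)/(2*‖u‖) with hs
  have hs1 : s < 1 := by
    rw [hs, div_lt_one (by linarith)]
    linarith
  have hs0 : 0 < s := by
    rw [hs]
    apply div_pos (by linarith) (by linarith)
  have hsu : s * ‖u‖ = (1 - ‖v‖ + ‖u‖)/2 := by
    rw [hs]
    field_simp
  have hnq : (u * conj u) = (↑(‖u‖):ℂ)^2 := by
    rw [Complex.mul_conj, ← Complex.sq_norm]
    push_cast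
    ring
  by_cases hv0 : v = 0
  · -- v = 0
    have habsv : ‖v‖ = 0 := by rw [hv0]; simp
    set z : ℂ := ↑s * (conj u / ↑(‖u‖)) with hz
    have hzd : z ∈ unitDisk := by
      show ‖z‖ < 1
      rw [hz]
      simp only [norm_mul, norm_div, Complex.norm_real, Real.norm_eq_abs, Complex.norm_conj, abs_norm]
      rw [div_self hupos.ne', _root_.abs_of_nonneg hs0.le]
      simpa using hs1
    have hmem := h z hzd
    have habs : u*z + v = ((s * ‖u‖ : ℝ) : ℂ) := by
      rw [hz, hv0]
      push_cast
      field_simp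
      linear_combination (↑s : ℂ) * hnq
    rw [unitDisk, Set.mem_setOf_eq, habs, Complex.norm_real, Real.norm_eq_abs,
      _root_.abs_of_nonneg (by positivity)] at hmem
    linarith [hsu, hcon, habsv, hmem]
  · -- v ≠ 0
    have hvpos : 0 < ‖v‖ := norm_pos_iff.2 hv0
    have hcv : (↑(‖v‖) : ℂ) ≠ 0 := Complex.ofReal_ne_zero.2 hvpos.ne'
    set z : ℂ := ↑s * (conj u * v / (↑(‖u‖) * ↑(‖v‖))) with hz
    have hzd : z ∈ unitDisk := by
      show ‖z‖ < 1
      rw [hz]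
      simp only [norm_mul, norm_div, Complex.norm_real, Real.norm_eq_abs, Complex.norm_conj, abs_norm]
      rw [_root_.abs_of_nonneg hs0.le]
      have h9 : ‖u‖ * ‖v‖ / (‖u‖ * ‖v‖) = 1 := by
        rw [div_self (by positivity)]
      rw [h9, mul_one]
      exact hs1
    have hmem := h z hzd
    have habs : u*z + v = ((s * ‖u‖ / ‖v‖ + 1 : ℝ) : ℂ) * v := by
      rw [hz]
      push_cast
      field_simp
      linear_combination (↑s : ℂ) * hnq
    rw [unitDisk, Set.mem_setOf_eq, habs, norm_mul, Complex.norm_real, Real.norm_eq_abs,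
      _root_.abs_of_nonneg (by positivity)] at hmem
    have he : (s * ‖u‖ / ‖v‖ + 1) * ‖v‖
        = s * ‖u‖ + ‖v‖ := by
      field_simp
    rw [he] at hmem
    linarith [hsu, hcon, hmem]

instance : (nhdsWithin (0:ℝ) (Set.Ioi 0)).NeBot := nhdsGT_neBot 0

lemma half_mem : (1/2 : ℂ) ∈ unitDisk := by
  show ‖(1/2 : ℂ)‖ < 1
  rw [show (1/2 : ℂ) = ((1/2 : ℝ):ℂ) by norm_num, Complex.norm_real, Real.norm_eq_abs]
  rw [abs_of_pos (by norm_num : (0:ℝ) < 1/2)]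
  norm_num

lemma zero_mem : (0:ℂ) ∈ unitDisk := by simp [unitDisk]

lemma forward_affine {f : ℂ → ℂ} {S : ℝ → ℂ → ℂ}
    (hgen : (∀ t : ℝ, 0 ≤ t → DifferentiableOn ℂ (S t) unitDisk ∧ Set.MapsTo (S t) unitDisk unitDisk) ∧
      ∀ z ∈ unitDisk, Filter.Tendsto (fun t : ℝ => (z - S t z) / (t : ℂ))
        (nhdsWithin 0 (Set.Ioi 0)) (nhds (f z)))
    (haff : ∀ t : ℝ, 0 ≤ t → ∃ u v : ℂ, ∀ z ∈ unitDisk, S t z = u * z + v) :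
    ∃ a : ℂ, 0 ≤ a.re ∧ ∀ z ∈ unitDisk, f z = a*z + f 0 := by
  classical
  choose u v huv using haff
  set U : ℝ → ℂ := fun t => if ht : 0 ≤ t then u t ht else 0 with hU
  set V : ℝ → ℂ := fun t => if ht : 0 ≤ t then v t ht else 0 with hV
  have hSU : ∀ t : ℝ, 0 ≤ t → ∀ z ∈ unitDisk, S t z = U t * z + V t := by
    intro t ht z hz
    rw [hU, hV]
    simp only [dif_pos ht]
    exact huv t ht z hz
  have hpos : ∀ᶠ t : ℝ in nhdsWithin 0 (Set.Ioi 0), 0 < t := self_mem_nhdsWithin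
  -- limit of V t / t
  have hB : Tendsto (fun t : ℝ => V t/(t:ℂ)) (nhdsWithin 0 (Set.Ioi 0)) (nhds (-f 0)) := by
    have h0 := hgen.2 0 zero_mem
    have hev : ∀ᶠ t : ℝ in nhdsWithin 0 (Set.Ioi 0),
        -((0 - S t 0)/(t:ℂ)) = V t/(t:ℂ) := by
      filter_upwards [hpos] with t ht
      rw [hSU t ht.le 0 zero_mem]
      ring
    exact (h0.neg).congr' hev
  -- limit of A t := (1 - U t)/t
  have hA : Tendsto (fun t : ℝ => (1 - U t)/(t:ℂ)) (nhdsWithin 0 (Set.Ioi 0))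
      (nhds (2*(f (1/2) + -f 0))) := by
    have hh := hgen.2 (1/2) half_mem
    have h2 : Tendsto (fun t : ℝ => 2*(((1/2 : ℂ) - S t (1/2))/(t:ℂ) + V t/(t:ℂ)))
        (nhdsWithin 0 (Set.Ioi 0)) (nhds (2*(f (1/2) + -f 0))) :=
      (hh.add hB).const_mul 2
    have hev : ∀ᶠ t : ℝ in nhdsWithin 0 (Set.Ioi 0),
        2*(((1/2 : ℂ) - S t (1/2))/(t:ℂ) + V t/(t:ℂ)) = (1 - U t)/(t:ℂ) := by
      filter_upwards [hpos] with t ht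
      rw [hSU t ht.le (1/2) half_mem]
      by_cases htz : (t:ℂ) = 0
      · rw [htz]
        simp
      · field_simp
        ring
    exact h2.congr' hev
  set a : ℂ := 2*(f (1/2) + -f 0) with ha
  refine ⟨a, ?_, ?_⟩
  · -- nonnegativity of Re a
    have hre : Tendsto (fun t : ℝ => ((1 - U t)/(t:ℂ)).re) (nhdsWithin 0 (Set.Ioi 0))
        (nhds a.re) := (Complex.continuous_re.tendsto _).comp hA
    refine ge_of_tendsto hre ?_
    filter_upwards [hpos] with t ht
    have hb := affine_bound (u := U t) (v := V t) (fun z hz => by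
      rw [← hSU t ht.le z hz]
      exact (hgen.1 t ht.le).2 hz)
    have hU1 : (U t).re ≤ 1 := by
      calc (U t).re ≤ ‖U t‖ := Complex.re_le_norm _
        _ ≤ 1 := by linarith [norm_nonneg (V t), hb]
    have : ((1 - U t)/(t:ℂ)).re = (1 - U t).re / t := by
      rw [Complex.div_ofReal_re]
    rw [this]
    apply div_nonneg _ ht.le
    simp only [Complex.sub_re, Complex.one_re]
    linarith
  · -- f is affine
    intro z hz
    have hz2 : Tendsto (fun t : ℝ => ((1 - U t)/(t:ℂ))*z - V t/(t:ℂ))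
        (nhdsWithin 0 (Set.Ioi 0)) (nhds (a*z - -f 0)) :=
      (hA.mul_const z).sub hB
    have hev : ∀ᶠ t : ℝ in nhdsWithin 0 (Set.Ioi 0),
        ((1 - U t)/(t:ℂ))*z - V t/(t:ℂ) = (z - S t z)/(t:ℂ) := by
      filter_upwards [hpos] with t ht
      rw [hSU t ht.le z hz]
      by_cases htz : (t:ℂ) = 0
      · rw [htz]; simp
      · field_simp
        ring
    have h3 := hz2.congr' hev
    have h4 := hgen.2 z hz
    have := tendsto_nhds_unique h4 h3
    rw [this]
    ring

lemma tendsto_phi : Tendsto (fun r : ℝ => ((r:ℂ)-1)) (nhdsWithin 1 (Set.Iio 1)) (nhds 0) := by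
  have h2 : Tendsto (fun r : ℝ => ((r:ℂ) - 1)) (nhdsWithin 1 (Set.Iio 1)) (nhds (1 - 1)) :=
    Tendsto.sub tendsto_coe_one tendsto_const_nhds
  simpa using h2

set_option maxHeartbeats 800000 in
lemma taylor_extract {f : ℂ → ℂ} {β : ℝ} {b c a C : ℂ}
    (hE : Tendsto (fun r : ℝ =>
        (f r - ((β:ℂ)*((r:ℂ)-1) + b/2*((r:ℂ)-1)^2 + c/6*((r:ℂ)-1)^3))/((r:ℂ)-1)^3)
      (nhdsWithin 1 (Set.Iio 1)) (nhds 0))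
    (haf : ∀ z ∈ unitDisk, f z = a*z + C) :
    a = (β:ℂ) ∧ b = 0 ∧ c = 0 ∧ C = -a := by
  set E : ℝ → ℂ := fun r =>
    (f r - ((β:ℂ)*((r:ℂ)-1) + b/2*((r:ℂ)-1)^2 + c/6*((r:ℂ)-1)^3))/((r:ℂ)-1)^3 with hEdef
  have hφne : ∀ r ∈ Set.Ioo (0:ℝ) 1, ((r:ℂ)-1) ≠ 0 := by
    intro r hr
    exact fun h => (one_sub_ne (mem_disk_of_real hr.1.le hr.2)) (by linear_combination -h)
  have hfr : ∀ r ∈ Set.Ioo (0:ℝ) 1, f r = a*(r:ℂ) + C := fun r hr =>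
    haf _ (mem_disk_of_real hr.1.le hr.2)
  -- step 0 : C = -a
  have hCa : C = -a := by
    have h1 : Tendsto (fun r : ℝ => E r * ((r:ℂ)-1)^3) (nhdsWithin 1 (Set.Iio 1))
        (nhds (0*0^3)) := Tendsto.mul hE (tendsto_phi.pow 3)
    norm_num at h1
    have hev : ∀ᶠ r : ℝ in nhdsWithin 1 (Set.Iio 1), E r * ((r:ℂ)-1)^3
        = a*(r:ℂ) + C - ((β:ℂ)*((r:ℂ)-1) + b/2*((r:ℂ)-1)^2 + c/6*((r:ℂ)-1)^3) := by
      filter_upwards [eventually_Ioo] with r hr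
      rw [hEdef]
      simp only
      rw [hfr r hr, div_mul_cancel₀ _ (pow_ne_zero 3 (hφne r hr))]
    have h2 := h1.congr' hev
    have h3 : Tendsto (fun r : ℝ =>
        a*(r:ℂ) + C - ((β:ℂ)*((r:ℂ)-1) + b/2*((r:ℂ)-1)^2 + c/6*((r:ℂ)-1)^3))
        (nhdsWithin 1 (Set.Iio 1))
        (nhds (a*1 + C - ((β:ℂ)*0 + b/2*0^2 + c/6*0^3))) := by
      apply Tendsto.sub
      · exact Tendsto.add (tendsto_coe_one.const_mul a) tendsto_const_nhds
      · exact Tendsto.add (Tendsto.add (tendsto_phi.const_mul _) ((tendsto_phi.pow 2).const_mul _))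
          ((tendsto_phi.pow 3).const_mul _)
    norm_num at h3
    have := tendsto_nhds_unique h2 h3
    linear_combination -this
  -- step 1 : a = β
  have hab : a = (β:ℂ) := by
    have h1 : Tendsto (fun r : ℝ => E r * ((r:ℂ)-1)^2) (nhdsWithin 1 (Set.Iio 1))
        (nhds (0*0^2)) := Tendsto.mul hE (tendsto_phi.pow 2)
    norm_num at h1
    have hev : ∀ᶠ r : ℝ in nhdsWithin 1 (Set.Iio 1), E r * ((r:ℂ)-1)^2
        = (a - (β:ℂ)) - b/2*((r:ℂ)-1) - c/6*((r:ℂ)-1)^2 := by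
      filter_upwards [eventually_Ioo] with r hr
      rw [hEdef]
      simp only
      rw [hfr r hr, hCa]
      have hne := hφne r hr
      field_simp
      ring
    have h2 := h1.congr' hev
    have h3 : Tendsto (fun r : ℝ => (a - (β:ℂ)) - b/2*((r:ℂ)-1) - c/6*((r:ℂ)-1)^2)
        (nhdsWithin 1 (Set.Iio 1)) (nhds ((a - (β:ℂ)) - b/2*0 - c/6*0^2)) :=
      Tendsto.sub (Tendsto.sub tendsto_const_nhds (tendsto_phi.const_mul _))
        ((tendsto_phi.pow 2).const_mul _)
    norm_num at h3
    have := tendsto_nhds_unique h2 h3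
    linear_combination -this
  -- step 2 : b = 0
  have hb0 : b = 0 := by
    have h1 : Tendsto (fun r : ℝ => E r * ((r:ℂ)-1)) (nhdsWithin 1 (Set.Iio 1))
        (nhds (0*0)) := Tendsto.mul hE tendsto_phi
    norm_num at h1
    have hev : ∀ᶠ r : ℝ in nhdsWithin 1 (Set.Iio 1), E r * ((r:ℂ)-1)
        = - b/2 - c/6*((r:ℂ)-1) := by
      filter_upwards [eventually_Ioo] with r hr
      rw [hEdef]
      simp only
      rw [hfr r hr, hCa, hab]
      have hne := hφne r hr
      field_simp
      ring
    have h2 := h1.congr' hev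
    have h3 : Tendsto (fun r : ℝ => - b/2 - c/6*((r:ℂ)-1))
        (nhdsWithin 1 (Set.Iio 1)) (nhds (- b/2 - c/6*0)) :=
      Tendsto.sub tendsto_const_nhds (tendsto_phi.const_mul _)
    norm_num at h3
    have := tendsto_nhds_unique h2 h3
    linear_combination 2*this
  -- step 3 : c = 0
  have hc0 : c = 0 := by
    have hev : ∀ᶠ r : ℝ in nhdsWithin 1 (Set.Iio 1), E r = - c/6 := by
      filter_upwards [eventually_Ioo] with r hr
      rw [hEdef]
      simp only
      rw [hfr r hr, hCa, hab, hb0]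
      have hne := hφne r hr
      field_simp
      ring
    have h2 := hE.congr' hev
    have h3 : Tendsto (fun _ : ℝ => - c/6) (nhdsWithin 1 (Set.Iio 1)) (nhds (- c/6)) :=
      tendsto_const_nhds
    have := tendsto_nhds_unique h2 h3
    linear_combination 6*this
  exact ⟨hab, hb0, hc0, hCa⟩

lemma construct_S {β : ℝ} (hβ : 0 ≤ β) {f : ℂ → ℂ}
    (hfeq : ∀ z ∈ unitDisk, f z = (β:ℂ)*(z-1)) :
    ∃ S : ℝ → ℂ → ℂ,
      (((∀ t : ℝ, 0 ≤ t → DifferentiableOn ℂ (S t) unitDisk ∧ Set.MapsTo (S t) unitDisk unitDisk) ∧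
        (∀ t : ℝ, 0 ≤ t → ∀ s : ℝ, 0 ≤ s → ∀ z ∈ unitDisk, S (t+s) z = S t (S s z)) ∧
        (∀ z ∈ unitDisk, Filter.Tendsto (fun t : ℝ => S t z) (nhdsWithin 0 (Set.Ioi 0)) (nhds z))) ∧
       (∀ z ∈ unitDisk, Filter.Tendsto (fun t : ℝ => (z - S t z)/(t:ℂ))
          (nhdsWithin 0 (Set.Ioi 0)) (nhds (f z)))) ∧
      ∀ t : ℝ, 0 ≤ t → ∃ u v : ℂ, ∀ z ∈ unitDisk, S t z = u * z + v := by
  set x : ℝ → ℝ := fun t => Real.exp (-(β*t)) with hx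
  set S : ℝ → ℂ → ℂ := fun t z => (x t : ℂ) * z + (1 - (x t : ℂ)) with hS
  have hx0 : ∀ t, 0 < x t := fun t => Real.exp_pos _
  have hx1 : ∀ t, 0 ≤ t → x t ≤ 1 := fun t ht =>
    Real.exp_le_one_iff.2 (by nlinarith)
  refine ⟨S, ⟨⟨?_, ?_, ?_⟩, ?_⟩, ?_⟩
  · -- holomorphic self-maps
    intro t ht
    constructor
    · exact ((differentiableOn_const _).mul differentiableOn_id).add (differentiableOn_const _)
    · intro z hz
      show ‖_‖ < 1
      rw [hS]
      simp only
      have h1 : ‖(x t : ℂ) * z + (1 - (x t : ℂ))‖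
          ≤ x t * ‖z‖ + (1 - x t) := by
        calc ‖(x t : ℂ) * z + (1 - (x t : ℂ))‖
            ≤ ‖(x t : ℂ) * z‖ + ‖1 - (x t : ℂ)‖ := norm_add_le _ _
          _ = x t * ‖z‖ + (1 - x t) := by
              rw [norm_mul, Complex.norm_real, Real.norm_eq_abs, _root_.abs_of_nonneg (hx0 t).le,
                show (1 : ℂ) - (x t : ℂ) = ((1 - x t : ℝ) : ℂ) by push_cast; ring,
                Complex.norm_real, Real.norm_eq_abs, _root_.abs_of_nonneg (by linarith [hx1 t ht])]
      have h2 : x t * ‖z‖ < x t * 1 :=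
        mul_lt_mul_of_pos_left hz (hx0 t)
      linarith
  · -- semigroup property
    intro t ht s hs z hz
    rw [hS]
    simp only
    have hxx : x (t+s) = x t * x s := by
      rw [hx]
      simp only
      rw [← Real.exp_add]
      ring_nf
    rw [hxx]
    push_cast
    ring
  · -- continuity at 0⁺
    intro z hz
    have hcont : Continuous (fun t : ℝ => (x t : ℂ) * z + (1 - (x t : ℂ))) := by
      have hcx : Continuous (fun t : ℝ => (x t : ℂ)) :=
        Complex.continuous_ofReal.comp (Real.continuous_exp.comp (continuous_const.mul continuous_id).neg)
      exact (hcx.mul continuous_const).add (continuous_const.sub hcx)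
    have h0 : (fun t : ℝ => (x t : ℂ) * z + (1 - (x t : ℂ))) 0 = z := by
      rw [hx]
      simp
    have h7 : Tendsto (fun t : ℝ => (x t : ℂ) * z + (1 - (x t : ℂ))) (nhds 0)
        (nhds ((x 0 : ℂ) * z + (1 - (x 0 : ℂ)))) := hcont.continuousAt
    have h8 : (x 0 : ℂ)*z + (1-(x 0 : ℂ)) = z := by rw [hx]; simp
    rw [h8] at h7
    exact h7.mono_left nhdsWithin_le_nhds
  · -- generator
    intro z hz
    have hslope : Tendsto (fun t : ℝ => (1 - x t)/t) (nhdsWithin 0 (Set.Ioi 0)) (nhds β) := by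
      have h1 : HasDerivAt (fun t : ℝ => -(β*t)) (-β) 0 := by
        have := ((hasDerivAt_id (0:ℝ)).const_mul β).neg
        exact this.congr_deriv (by simp)
      have h2 : HasDerivAt (fun t : ℝ => Real.exp (-(β*t))) (-β) 0 := by
        have := h1.exp
        simpa using this
      have h3 : HasDerivAt (fun t : ℝ => 1 - Real.exp (-(β*t))) β 0 := by
        have := h2.const_sub 1
        simpa using this
      have h4 := hasDerivAt_iff_tendsto_slope.1 h3
      have h5 : Tendsto (slope (fun t : ℝ => 1 - Real.exp (-(β*t))) 0)
          (nhdsWithin 0 (Set.Ioi 0)) (nhds β) :=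
        h4.mono_left (nhdsWithin_mono 0 (fun t (ht : t ∈ Set.Ioi 0) => ne_of_gt ht))
      refine h5.congr (fun t => ?_)
      rw [slope_def_field]
      rw [hx]
      simp [Real.exp_zero]
    have hslopeC : Tendsto (fun t : ℝ => (((1 - x t)/t : ℝ) : ℂ) * (z - 1))
        (nhdsWithin 0 (Set.Ioi 0)) (nhds ((β:ℂ)*(z-1))) := by
      have h6 : Tendsto (fun t : ℝ => (((1 - x t)/t : ℝ) : ℂ)) (nhdsWithin 0 (Set.Ioi 0))
          (nhds (β:ℂ)) := (Complex.continuous_ofReal.tendsto β).comp hslope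
      have := h6.mul_const (z-1)
      refine this.congr (fun t => ?_)
      push_cast
      ring
    rw [hfeq z hz]
    refine hslopeC.congr (fun t => ?_)
    rw [hS]
    push_cast
    by_cases htz : (t:ℂ) = 0
    · rw [htz]; simp
    · field_simp
      ring
  · -- affine
    intro t ht
    exact ⟨(x t : ℂ), 1 - (x t : ℂ), fun z hz => rfl⟩

theorem stmt12 (f : ℂ → ℂ) (hf : IsGenerator f)
    (β : ℝ) (b c : ℂ) (hC : CA3At1 f 0 (β : ℂ) b c)
    (p : ℂ → ℂ) (hp : ∀ z ∈ unitDisk, f z = -(1 - z) ^ 2 * p z) :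
    ((∃ S : ℝ → ℂ → ℂ, Generates f S ∧
        ∀ t : ℝ, 0 ≤ t → ∃ u v : ℂ, ∀ z ∈ unitDisk, S t z = u * z + v) ↔
      ((∀ z ∈ unitDisk, β / 2 ≤ (p z).re) ∧ b = 0 ∧ c = 0)) ∧
    (((∀ z ∈ unitDisk, β / 2 ≤ (p z).re) ∧ b = 0 ∧ c = 0) →
      0 ≤ β ∧ ∀ z ∈ unitDisk, f z = (β : ℂ) * (z - 1)) := by
  have hrigid : ((∀ z ∈ unitDisk, β / 2 ≤ (p z).re) ∧ b = 0 ∧ c = 0) →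
      0 ≤ β ∧ ∀ z ∈ unitDisk, f z = (β : ℂ) * (z - 1) := by
    rintro ⟨hre, hb, hc⟩
    subst hb
    subst hc
    have hG : Tendsto (fun r : ℝ => (f r - β*((r:ℂ)-1))/((r:ℂ)-1)^3)
        (nhdsWithin 1 (Set.Iio 1)) (nhds 0) := by
      have h1 := tendsto_radial hC
      refine h1.congr (fun r => ?_)
      norm_num
    exact rigidity hf.1 hG hp hre
  refine ⟨⟨?_, ?_⟩, hrigid⟩
  · rintro ⟨S, hgen, haff⟩
    obtain ⟨⟨hhol, _, _⟩, hlim⟩ := hgen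
    obtain ⟨a, hare, haf⟩ := forward_affine ⟨hhol, hlim⟩ haff
    have hE : Tendsto (fun r : ℝ =>
        (f r - ((β:ℂ)*((r:ℂ)-1) + b/2*((r:ℂ)-1)^2 + c/6*((r:ℂ)-1)^3))/((r:ℂ)-1)^3)
        (nhdsWithin 1 (Set.Iio 1)) (nhds 0) := by
      have h1 := tendsto_radial hC
      refine h1.congr (fun r => ?_)
      ring_nf
    obtain ⟨hab, hb0, hc0, hCa⟩ := taylor_extract hE haf
    refine ⟨?_, hb0, hc0⟩
    intro z hz
    have hfz : f z = (β:ℂ)*(z-1) := by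
      rw [haf z hz, hCa, hab]
      ring
    have hβ0 : 0 ≤ β := by
      rw [hab] at hare
      simpa using hare
    have hne := one_sub_ne hz
    have hpz : p z = (β:ℂ)/(1-z) := by
      rw [eq_div_iff hne]
      apply mul_left_cancel₀ hne
      have h3 := (hp z hz).symm.trans hfz
      linear_combination -h3
    rw [hpz]
    have hN0 : 0 < normSq (1-z) := normSq_pos.2 hne
    have hNz : normSq z < 1 := by
      rw [← Complex.sq_norm]
      exact pow_lt_one₀ (norm_nonneg z) hz (by norm_num)
    have hqre1 : ((β:ℂ)/(1-z)).re = β*(1-z).re/normSq (1-z) := by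
      rw [Complex.div_re]
      simp [Complex.ofReal_re, Complex.ofReal_im]
    rw [hqre1, le_div_iff₀ hN0]
    have hN : normSq (1-z) = 1 - 2*z.re + normSq z := by
      simp [normSq_apply, Complex.sub_re, Complex.sub_im]
      ring
    simp only [Complex.sub_re, Complex.one_re]
    nlinarith [mul_nonneg hβ0 (by linarith : (0:ℝ) ≤ 1 - normSq z)]
  · rintro hcond
    obtain ⟨hβ0, hfeq⟩ := hrigid hcond
    obtain ⟨S, hS1, hS2⟩ := construct_S hβ0 hfeq
    exact ⟨S, hS1, hS2⟩
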